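/- Let α > 2, r₀ > 0, c > 0 and 0 < β ≤ 1. Then (c/π) ∫₀^∞ (max{r₀, r})^{−α} · 2π r · (1 − e^{−(c/β) r²}) dr = c r₀^{2−α}·α/(α−2) + β r₀^{−α}(e^{−(c/β)r₀²} − 1) − c^{α/2} β^{1−α/2} Γ(1 − α/2, (c/β) r₀²), where Γ(a, x) = ∫ₓ^∞ t^{a−1} e^{−t} dt is the upper incomplete gamma function. -/

import Mathlib

open Real MeasureTheory Set

lemma ginibre_aux_image (k r₀ : ℝ) (hk : 0 < k) (hr₀ : 0 < r₀) :
    (fun r : ℝ => k * r ^ 2) '' Ioi r₀ = Ioi (k * r₀ ^ 2) := by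
  ext t
  constructor
  · rintro ⟨r, hr, rfl⟩
    have hr' : r₀ < r := hr
    have h2 : r₀ ^ 2 < r ^ 2 := by nlinarith
    have : k * r₀ ^ 2 < k * r ^ 2 := mul_lt_mul_of_pos_left h2 hk
    simpa using this
  · intro ht
    have ht' : k * r₀ ^ 2 < t := ht
    have htpos : 0 < t := lt_trans (by positivity) ht'
    refine ⟨Real.sqrt (t / k), ?_, ?_⟩
    · have h1 : r₀ ^ 2 < t / k := (lt_div_iff₀ hk).mpr (by linarith [mul_comm k (r₀ ^ 2)])
      have := Real.lt_sqrt hr₀.le (y := t / k)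
      exact mem_Ioi.mpr (this.mpr h1)
    · show k * Real.sqrt (t / k) ^ 2 = t
      rw [Real.sq_sqrt (by positivity : (0:ℝ) ≤ t / k)]; field_simp

set_option maxHeartbeats 1000000

lemma ginibre_aux_cont1 (k : ℝ) : Continuous fun r : ℝ => Real.exp (-k * r ^ 2) :=
  Real.continuous_exp.comp (continuous_const.mul (continuous_pow 2) : Continuous fun r : ℝ => -k * r ^ 2)

lemma ginibre_aux_cont2 : Continuous fun r : ℝ => 2 * π * r :=
  continuous_const.mul continuous_id

/-- Mean interference of the β-Ginibre wireless network of intensity `c/π` via the reduced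
second moment measure:
`(c/π) ∫₀^∞ (max{r₀,r})^{−α} 2πr (1 − e^{−(c/β)r²}) dr
  = c r₀^{2−α} α/(α−2) + β r₀^{−α}(e^{−(c/β)r₀²} − 1) − c^{α/2} β^{1−α/2} Γ(1−α/2, (c/β)r₀²)`,
where `Γ(a,x) = ∫ₓ^∞ t^{a−1} e^{−t} dt` is the upper incomplete gamma function. -/
theorem ginibre_mean_interference_second_moment (α r₀ c β : ℝ) (hα : 2 < α) (hr₀ : 0 < r₀)
    (hc : 0 < c) (hβ0 : 0 < β) (hβ1 : β ≤ 1) :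
    (c / π) * ∫ r in Ioi (0 : ℝ),
        (max r₀ r) ^ (-α) * (2 * π * r) * (1 - Real.exp (-(c / β) * r ^ 2))
      = c * r₀ ^ (2 - α) * (α / (α - 2))
        + β * r₀ ^ (-α) * (Real.exp (-(c / β) * r₀ ^ 2) - 1)
        - c ^ (α / 2) * β ^ (1 - α / 2) *
          ∫ t in Ioi ((c / β) * r₀ ^ 2), t ^ ((1 - α / 2) - 1) * Real.exp (-t) := by
  set k := c / β with hk_def
  have hk : 0 < k := div_pos hc hβ0
  have hβk : β * k = c := by rw [hk_def]; field_simp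
  clear_value k
  set f : ℝ → ℝ := fun r => (max r₀ r) ^ (-α) * (2 * π * r) * (1 - Real.exp (-k * r ^ 2))
    with hf_def
  -- continuity of f
  have hmaxpos : ∀ r : ℝ, 0 < max r₀ r := fun r => lt_of_lt_of_le hr₀ (le_max_left _ _)
  have hf_cont : Continuous f := by
    exact (((continuous_const.max continuous_id).rpow_const
        (fun x => Or.inl (hmaxpos x).ne')).mul (ginibre_aux_cont2)).mul
      (continuous_const.sub (ginibre_aux_cont1 k))
  -- integrability on Ioc 0 r₀
  have hInt1 : IntegrableOn f (Ioc 0 r₀) := hf_cont.integrableOn_Ioc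
  -- integrability on Ioi r₀ of bound
  have h1α : 1 - α < -1 := by linarith
  have hg1_int : IntegrableOn (fun r : ℝ => r ^ (1 - α)) (Ioi r₀) :=
    integrableOn_Ioi_rpow_of_lt h1α hr₀
  have hbound_int : IntegrableOn (fun r : ℝ => 2 * π * r ^ (1 - α)) (Ioi r₀) :=
    hg1_int.const_mul _
  have hInt2 : IntegrableOn f (Ioi r₀) := by
    apply hbound_int.mono' (hf_cont.aestronglyMeasurable.restrict)
    rw [ae_restrict_iff' measurableSet_Ioi]
    filter_upwards with r hr
    have hr0 : (0 : ℝ) < r := hr₀.trans hr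
    have hmax : max r₀ r = r := max_eq_right (le_of_lt hr)
    have he : Real.exp (-k * r ^ 2) ≤ 1 := by
      rw [← Real.exp_zero]; apply Real.exp_le_exp.mpr; nlinarith
    have he' : 0 < Real.exp (-k * r ^ 2) := Real.exp_pos _
    have hfr : f r = r ^ (-α) * (2 * π * r) * (1 - Real.exp (-k * r ^ 2)) := by
      rw [hf_def]; simp [hmax]
    have hrpow : r ^ (-α) * r = r ^ (1 - α) := by
      rw [show (1 - α) = -α + 1 by ring, Real.rpow_add hr0, Real.rpow_one]
    have hfnn : 0 ≤ f r := by
      rw [hfr]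
      have h1 : (0:ℝ) ≤ r ^ (-α) := Real.rpow_nonneg hr0.le _
      have h2 : (0:ℝ) < π := Real.pi_pos
      apply mul_nonneg (mul_nonneg h1 (by positivity)) (by linarith)
    rw [Real.norm_eq_abs, abs_of_nonneg hfnn, hfr]
    calc r ^ (-α) * (2 * π * r) * (1 - Real.exp (-k * r ^ 2))
        ≤ r ^ (-α) * (2 * π * r) * 1 := by
          apply mul_le_mul_of_nonneg_left (by linarith)
          have : (0:ℝ) ≤ r ^ (-α) := Real.rpow_nonneg hr0.le _
          have : (0:ℝ) < π := Real.pi_pos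
          positivity
      _ = 2 * π * r ^ (1 - α) := by rw [mul_one, ← hrpow]; ring
  -- split the integral
  have hsplit : ∫ r in Ioi (0:ℝ), f r = (∫ r in Ioc 0 r₀, f r) + ∫ r in Ioi r₀, f r := by
    rw [← Ioc_union_Ioi_eq_Ioi hr₀.le]
    exact setIntegral_union Ioc_disjoint_Ioi_same measurableSet_Ioi hInt1 hInt2
  -- first piece
  have hE := Real.exp_pos (-k * r₀ ^ 2)
  have hI1 : ∫ r in Ioc 0 r₀, f r
      = π * r₀ ^ (2 - α) + π / k * r₀ ^ (-α) * (Real.exp (-k * r₀ ^ 2) - 1) := by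
    have hcongr : ∫ r in Ioc 0 r₀, f r
        = ∫ r in Ioc 0 r₀, r₀ ^ (-α) * (2 * π * r) * (1 - Real.exp (-k * r ^ 2)) := by
      apply setIntegral_congr_fun measurableSet_Ioc
      intro r hr
      rw [hf_def]; simp [max_eq_left hr.2]
    rw [hcongr, ← intervalIntegral.integral_of_le hr₀.le]
    have hF : ∀ r ∈ uIcc (0:ℝ) r₀, HasDerivAt
        (fun r : ℝ => r₀ ^ (-α) * (π * r ^ 2 + π / k * Real.exp (-k * r ^ 2)))
        (r₀ ^ (-α) * (2 * π * r) * (1 - Real.exp (-k * r ^ 2))) r := by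
      intro r _
      have h1 : HasDerivAt (fun r : ℝ => r ^ 2) (2 * r) r := by
        simpa using hasDerivAt_pow 2 r
      have h2 : HasDerivAt (fun r : ℝ => -k * r ^ 2) (-k * (2 * r)) r := h1.const_mul (-k)
      have h3 : HasDerivAt (fun r : ℝ => Real.exp (-k * r ^ 2))
          (Real.exp (-k * r ^ 2) * (-k * (2 * r))) r := h2.exp
      have h4 := ((h1.const_mul π).add (h3.const_mul (π / k))).const_mul (r₀ ^ (-α))
      refine h4.congr_deriv ?_
      field_simp
      ring
    rw [intervalIntegral.integral_eq_sub_of_hasDerivAt hF]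
    · have hr₀pow : r₀ ^ (-α) * r₀ ^ 2 = r₀ ^ (2 - α) := by
        rw [← Real.rpow_natCast r₀ 2, ← Real.rpow_add hr₀]
        congr 1
        push_cast; ring
      simp only [ne_eq, mul_zero, neg_zero, Real.exp_zero, zero_pow, OfNat.ofNat_ne_zero,
        not_false_eq_true, mul_one]
      linear_combination π * hr₀pow
    · exact ((continuous_const.mul ginibre_aux_cont2).mul
        (continuous_const.sub (ginibre_aux_cont1 k))).intervalIntegrable _ _
  -- integrability of g₂
  have hg2_int : IntegrableOn (fun r : ℝ => r ^ (1 - α) * Real.exp (-k * r ^ 2)) (Ioi r₀) := by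
    apply hg1_int.mono'
    · apply ContinuousOn.aestronglyMeasurable _ measurableSet_Ioi
      apply ContinuousOn.mul
      · exact continuousOn_id.rpow_const
          (fun x hx => Or.inl (hr₀.trans hx).ne')
      · exact (ginibre_aux_cont1 k).continuousOn
    · rw [ae_restrict_iff' measurableSet_Ioi]
      filter_upwards with r hr
      have hr0 : (0:ℝ) < r := hr₀.trans hr
      have he : Real.exp (-k * r ^ 2) ≤ 1 := by
        rw [← Real.exp_zero]; exact Real.exp_le_exp.mpr (by nlinarith)
      have hp : (0:ℝ) ≤ r ^ (1 - α) := Real.rpow_nonneg hr0.le _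
      rw [Real.norm_eq_abs, abs_of_nonneg (mul_nonneg hp (Real.exp_pos _).le)]
      calc r ^ (1 - α) * Real.exp (-k * r ^ 2) ≤ r ^ (1 - α) * 1 :=
            mul_le_mul_of_nonneg_left he hp
        _ = r ^ (1 - α) := mul_one _
  -- substitution t = k r²
  have hφ' : ∀ r ∈ Ioi r₀, HasDerivWithinAt (fun r : ℝ => k * r ^ 2) (2 * k * r) (Ioi r₀) r := by
    intro r _
    have h1 : HasDerivAt (fun r : ℝ => k * r ^ 2) (2 * k * r) r := by
      have := (hasDerivAt_pow 2 r).const_mul k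
      refine this.congr_deriv ?_
      push_cast; ring
    exact h1.hasDerivWithinAt
  have hinj : InjOn (fun r : ℝ => k * r ^ 2) (Ioi r₀) := by
    intro a ha b hb hab
    simp only [mem_Ioi] at ha hb
    have h2 : a ^ 2 = b ^ 2 := mul_left_cancel₀ hk.ne' hab
    rcases lt_trichotomy a b with h | h | h
    · nlinarith
    · exact h
    · nlinarith
  have hsub : (∫ t in Ioi (k * r₀ ^ 2), t ^ ((1 - α / 2) - 1) * Real.exp (-t))
      = ∫ r in Ioi r₀,
          |2 * k * r| • ((k * r ^ 2) ^ ((1 - α / 2) - 1) * Real.exp (-(k * r ^ 2))) := by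
    rw [← ginibre_aux_image k r₀ hk hr₀]
    exact integral_image_eq_integral_abs_deriv_smul measurableSet_Ioi hφ' hinj _
  have hpt : ∀ r ∈ Ioi r₀,
      |2 * k * r| • ((k * r ^ 2) ^ ((1 - α / 2) - 1) * Real.exp (-(k * r ^ 2)))
      = (2 * k ^ (1 - α / 2)) * (r ^ (1 - α) * Real.exp (-k * r ^ 2)) := by
    intro r hr
    have hr0 : (0:ℝ) < r := hr₀.trans hr
    have habs : |2 * k * r| = 2 * k * r := abs_of_pos (by positivity)
    have hkr : (k * r ^ 2) ^ ((1 - α / 2) - 1) = k ^ ((1 - α / 2) - 1) * r ^ (-α) := by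
      rw [Real.mul_rpow hk.le (by positivity), ← Real.rpow_natCast r 2,
        ← Real.rpow_mul hr0.le]
      congr 1
      push_cast; ring
    have h1 : k * k ^ ((1 - α / 2) - 1) = k ^ (1 - α / 2) := by
      nth_rewrite 1 [← Real.rpow_one k]
      rw [← Real.rpow_add hk]
      congr 1; ring
    have h2 : r * r ^ (-α) = r ^ (1 - α) := by
      rw [show (1 - α) = 1 + -α by ring, Real.rpow_add hr0, Real.rpow_one]
    have hne : -(k * r ^ 2) = -k * r ^ 2 := by ring
    rw [smul_eq_mul, habs, hkr, hne]
    calc 2 * k * r * (k ^ ((1 - α / 2) - 1) * r ^ (-α) * Real.exp (-k * r ^ 2))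
        = 2 * (k * k ^ ((1 - α / 2) - 1)) * (r * r ^ (-α)) * Real.exp (-k * r ^ 2) := by
          ring
      _ = _ := by rw [h1, h2]; ring
  have hG : (∫ t in Ioi (k * r₀ ^ 2), t ^ ((1 - α / 2) - 1) * Real.exp (-t))
      = (2 * k ^ (1 - α / 2)) * ∫ r in Ioi r₀, r ^ (1 - α) * Real.exp (-k * r ^ 2) := by
    rw [hsub, setIntegral_congr_fun measurableSet_Ioi hpt, integral_const_mul]
  -- second piece
  have hα2 : α - 2 ≠ 0 := by intro h; linarith
  have hα2' : (2:ℝ) - α ≠ 0 := by intro h; linarith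
  have hI2 : ∫ r in Ioi r₀, f r = 2 * π * (r₀ ^ (2 - α) / (α - 2))
      - 2 * π * ∫ r in Ioi r₀, r ^ (1 - α) * Real.exp (-k * r ^ 2) := by
    have hcongr : ∫ r in Ioi r₀, f r = ∫ r in Ioi r₀,
        (2 * π * (r ^ (1 - α)) - 2 * π * (r ^ (1 - α) * Real.exp (-k * r ^ 2))) := by
      apply setIntegral_congr_fun measurableSet_Ioi
      intro r hr
      have hr' : r₀ < r := hr
      have hr0 : (0:ℝ) < r := hr₀.trans hr'
      have hmax : max r₀ r = r := max_eq_right hr'.le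
      have hrpow : r ^ (-α) * r = r ^ (1 - α) := by
        rw [show (1 - α) = -α + 1 by ring, Real.rpow_add hr0, Real.rpow_one]
      rw [hf_def]
      simp only [hmax]
      calc r ^ (-α) * (2 * π * r) * (1 - Real.exp (-k * r ^ 2))
          = (r ^ (-α) * r) * (2 * π) * (1 - Real.exp (-k * r ^ 2)) := by ring
        _ = _ := by rw [hrpow]; ring
    rw [hcongr, integral_sub (hg1_int.const_mul _) (hg2_int.const_mul _),
      integral_const_mul, integral_const_mul, integral_Ioi_rpow_of_lt h1α hr₀,
      show (1 - α + 1) = 2 - α by ring]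
    congr 2
    rw [neg_div, ← div_neg, neg_sub]
  -- key power identity
  have hβne : β ^ (1 - α / 2) ≠ 0 := (Real.rpow_pos_of_pos hβ0 _).ne'
  have hkey : c ^ (α / 2) * β ^ (1 - α / 2) * k ^ (1 - α / 2) = c := by
    have h1 : k ^ (1 - α / 2) = c ^ (1 - α / 2) / β ^ (1 - α / 2) := by
      rw [hk_def, Real.div_rpow hc.le hβ0.le]
    have h2 : β ^ (1 - α / 2) * (c ^ (1 - α / 2) / β ^ (1 - α / 2)) = c ^ (1 - α / 2) := by
      field_simp
    rw [h1, mul_assoc, h2, ← Real.rpow_add hc, show α / 2 + (1 - α / 2) = 1 by ring,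
      Real.rpow_one]
  -- put everything together
  rw [hsplit, hI1, hI2, hG]
  have hπ : (0:ℝ) < π := Real.pi_pos
  have hfin : c ^ (α / 2) * β ^ (1 - α / 2) *
      (2 * k ^ (1 - α / 2) * ∫ r in Ioi r₀, r ^ (1 - α) * Real.exp (-k * r ^ 2))
      = 2 * c * ∫ r in Ioi r₀, r ^ (1 - α) * Real.exp (-k * r ^ 2) := by
    linear_combination (2 * ∫ r in Ioi r₀, r ^ (1 - α) * Real.exp (-k * r ^ 2)) * hkey
  rw [hfin, ← hβk]
  field_simp
  ring
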